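/- Passivity preservation for the binomial kernel: if r : ℕ → ℝ≥0 is a finitely supported nonincreasing probability distribution, then the pushed-forward distribution q_n = Σ_{k ≥ n} r_k C(k,n) η^n (1-η)^{k-n} is also nonincreasing in n, for any η ∈ [0,1]. -/

import Mathlib

open scoped NNReal BigOperators

open Finset

lemma key_identity (η : ℝ) (n : ℕ) : ∀ m, n ≤ m →
    ∑ k ∈ Icc n m, (k.choose n : ℝ) * η ^ n * (1 - η) ^ (k - n)
      = (∑ k ∈ Icc (n + 1) m, (k.choose (n + 1) : ℝ) * η ^ (n + 1) * (1 - η) ^ (k - (n + 1)))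
        + ((m + 1).choose (n + 1) : ℝ) * η ^ n * (1 - η) ^ (m - n) := by
  intro m hm
  induction m, hm using Nat.le_induction with
  | base =>
      simp [Nat.sub_self, Icc_eq_empty_of_lt (Nat.lt_succ_self n)]
  | succ m hm ih =>
      rw [Finset.sum_Icc_succ_top (by omega : n ≤ m + 1),
        Finset.sum_Icc_succ_top (by omega : n + 1 ≤ m + 1), ih]
      have h1 : m + 1 - n = (m - n) + 1 := by omega
      have h2 : m + 1 - (n + 1) = m - n := by omega
      have hp : ((m + 1 + 1).choose (n + 1) : ℝ) = (m + 1).choose n + (m + 1).choose (n + 1) := by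
        rw [Nat.choose_succ_succ (m + 1) n]
        push_cast; ring
      rw [h1, h2, hp]
      ring

lemma T_nonneg (η : ℝ) (hη0 : 0 ≤ η) (hη1 : η ≤ 1) (n m : ℕ) :
    0 ≤ ∑ k ∈ Icc n m, (k.choose n : ℝ) * η ^ n * (1 - η) ^ (k - n) := by
  refine Finset.sum_nonneg fun k _ => ?_
  have : (0:ℝ) ≤ 1 - η := by linarith
  positivity

lemma T_mono (η : ℝ) (hη0 : 0 ≤ η) (hη1 : η ≤ 1) (n m : ℕ) :
    ∑ k ∈ Icc (n + 1) m, (k.choose (n + 1) : ℝ) * η ^ (n + 1) * (1 - η) ^ (k - (n + 1))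
      ≤ ∑ k ∈ Icc n m, (k.choose n : ℝ) * η ^ n * (1 - η) ^ (k - n) := by
  rcases le_or_gt n m with hm | hm
  · rw [key_identity η n m hm]
    have h1η : (0:ℝ) ≤ 1 - η := by linarith
    have : (0:ℝ) ≤ ((m + 1).choose (n + 1) : ℝ) * η ^ n * (1 - η) ^ (m - n) := by positivity
    linarith
  · rw [Icc_eq_empty_of_lt hm, Icc_eq_empty_of_lt (by omega)]
    simp

theorem loss_channel_passive_preserving
    (η : ℝ) (hη0 : 0 ≤ η) (hη1 : η ≤ 1)
    (N : ℕ) (r : ℕ → ℝ≥0)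
    (hmono : ∀ k : ℕ, r (k + 1) ≤ r k)
    (hrN : ∀ i, N < i → r i = 0)
    (hr1 : ∑ i ∈ Finset.range (N + 1), r i = 1) :
    ∀ n : ℕ,
      ∑ k ∈ Finset.Icc (n + 1) N, (r k : ℝ) * (k.choose (n + 1)) * η ^ (n + 1) * (1 - η) ^ (k - (n + 1))
        ≤ ∑ k ∈ Finset.Icc n N, (r k : ℝ) * (k.choose n) * η ^ n * (1 - η) ^ (k - n) := by
  intro n
  have h1η : (0:ℝ) ≤ 1 - η := by linarith
  -- differences
  set d : ℕ → ℝ := fun m => (r m : ℝ) - (r (m + 1) : ℝ) with hd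
  have hdpos : ∀ m, 0 ≤ d m := fun m => by
    simp only [hd, sub_nonneg]
    exact_mod_cast hmono m
  -- telescoping: r k = ∑_{m ∈ Icc k N} d m for k ≤ N
  have htel : ∀ k, k ≤ N → (r k : ℝ) = ∑ m ∈ Icc k N, d m := by
    intro k hk
    have : Icc k N = Ico k (N + 1) := by rw [Finset.Ico_add_one_right_eq_Icc]
    rw [this, Finset.sum_Ico_eq_sum_range]
    have h4 : ∀ i ∈ range (N + 1 - k), d (k + i)
        = (fun i => (r (k + i) : ℝ)) i - (fun i => (r (k + i) : ℝ)) (i + 1) := by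
      intro i _; simp [hd, Nat.add_assoc]
    rw [Finset.sum_congr rfl h4, Finset.sum_range_sub' (fun i => (r (k + i) : ℝ))]
    have hN1 : k + (N + 1 - k) = N + 1 := by omega
    rw [hN1, hrN (N + 1) (Nat.lt_succ_self N)]
    simp
  -- abstract the per-level terms
  have main : ∀ j : ℕ,
      ∑ k ∈ Icc j N, (r k : ℝ) * ((k.choose j : ℝ) * η ^ j * (1 - η) ^ (k - j))
        = ∑ m ∈ Icc j N, d m * ∑ k ∈ Icc j m, (k.choose j : ℝ) * η ^ j * (1 - η) ^ (k - j) := by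
    intro j
    have step1 : ∀ k ∈ Icc j N,
        (r k : ℝ) * ((k.choose j : ℝ) * η ^ j * (1 - η) ^ (k - j))
          = ∑ m ∈ Icc k N, d m * ((k.choose j : ℝ) * η ^ j * (1 - η) ^ (k - j)) := by
      intro k hk
      rw [← Finset.sum_mul, ← htel k (mem_Icc.mp hk).2]
    rw [Finset.sum_congr rfl step1]
    rw [Finset.sum_comm' (t' := Icc j N) (s' := fun m => Icc j m) ?_]
    · exact Finset.sum_congr rfl fun m _ => by rw [Finset.mul_sum]
    · intro k m
      simp only [mem_Icc]
      omega
  calc ∑ k ∈ Finset.Icc (n + 1) N, (r k : ℝ) * (k.choose (n + 1)) * η ^ (n + 1) * (1 - η) ^ (k - (n + 1))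
      = ∑ k ∈ Icc (n + 1) N, (r k : ℝ) * ((k.choose (n + 1) : ℝ) * η ^ (n + 1) * (1 - η) ^ (k - (n + 1))) := by
        exact Finset.sum_congr rfl fun k _ => by ring
    _ = ∑ m ∈ Icc (n + 1) N, d m * ∑ k ∈ Icc (n + 1) m, (k.choose (n + 1) : ℝ) * η ^ (n + 1) * (1 - η) ^ (k - (n + 1)) := main (n + 1)
    _ ≤ ∑ m ∈ Icc (n + 1) N, d m * ∑ k ∈ Icc n m, (k.choose n : ℝ) * η ^ n * (1 - η) ^ (k - n) := by
        refine Finset.sum_le_sum fun m _ => ?_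
        exact mul_le_mul_of_nonneg_left (T_mono η hη0 hη1 n m) (hdpos m)
    _ ≤ ∑ m ∈ Icc n N, d m * ∑ k ∈ Icc n m, (k.choose n : ℝ) * η ^ n * (1 - η) ^ (k - n) := by
        refine Finset.sum_le_sum_of_subset_of_nonneg (Finset.Icc_subset_Icc_left (Nat.le_succ n)) ?_
        intro m _ _
        exact mul_nonneg (hdpos m) (T_nonneg η hη0 hη1 n m)
    _ = ∑ k ∈ Finset.Icc n N, (r k : ℝ) * (k.choose n) * η ^ n * (1 - η) ^ (k - n) := by
        rw [← main n]
        exact Finset.sum_congr rfl fun k _ => by ring
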